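/- arXiv:2101.07838 — 3 statements merged into one kernel-verified Lean document; each statement's English description precedes it below -/
import Mathlib

section
/- Let G be a finite group with no non-identity normal abelian subgroup, and let H be a CD-subgroup of G. Then H ∩ C_G(H) = 1, H is normal in G, and G = H × C_G(H) (internal direct product: H·C_G(H) = G and H ∩ C_G(H) = 1 with both factors normal). -/
open Pointwise

/-- The Chermak–Delgado index-measure of a subgroup `H` of `G`:
`m(G,H) = |G:H| * |G:C_G(H)|`. -/
noncomputable def cdMeasure {G : Type*} [Group G] (H : Subgroup G) : ℕ :=
  H.index * (Subgroup.centralizer (H : Set G)).index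

/-- `μ(G)`, the minimum of `m(G,H)` over all subgroups `H ≤ G`. -/
noncomputable def cdMu (G : Type*) [Group G] : ℕ :=
  sInf {n : ℕ | ∃ H : Subgroup G, cdMeasure H = n}

/-- A subgroup `H ≤ G` is a CD-subgroup if `m(G,H) = μ(G)`. -/
def IsCDSubgroup {G : Type*} [Group G] (H : Subgroup G) : Prop :=
  cdMeasure H = cdMu G

set_option linter.unusedSectionVars false
set_option maxHeartbeats 1000000

namespace CD17

open Subgroup

variable {G : Type*} [Group G]

/-- The multiplicative Chermak–Delgado measure `|H| * |C_G(H)|`. -/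
noncomputable def dd (X : Subgroup G) : ℕ :=
  Nat.card X * Nat.card (Subgroup.centralizer (X : Set G))

/-- `X` maximizes the multiplicative CD measure. -/
def IsM (X : Subgroup G) : Prop := ∀ Y : Subgroup G, dd Y ≤ dd X

/-- Conjugate subgroup `g X g⁻¹`. -/
def cnj (g : G) (X : Subgroup G) : Subgroup G := X.map (MulAut.conj g).toMonoidHom

lemma mem_cnj {g y : G} {X : Subgroup G} : y ∈ cnj g X ↔ g⁻¹ * y * g ∈ X := by
  rw [cnj, X.mem_map_equiv]; simp

lemma cnj_cnj (a b : G) (X : Subgroup G) : cnj a (cnj b X) = cnj (a * b) X := by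
  ext y
  have e : b⁻¹ * (a⁻¹ * y * a) * b = (a * b)⁻¹ * y * (a * b) := by group
  rw [mem_cnj, mem_cnj, mem_cnj, e]

lemma cnj_mono {X Y : Subgroup G} (g : G) (h : X ≤ Y) : cnj g X ≤ cnj g Y :=
  fun _ hy => mem_cnj.mpr (h (mem_cnj.mp hy))

lemma cnj_of_mem {x : G} {X : Subgroup G} (hx : x ∈ X) : cnj x X = X := by
  ext y
  rw [mem_cnj]
  constructor
  · intro h
    have := X.mul_mem (X.mul_mem hx h) (X.inv_mem hx)
    convert this using 1
    group
  · intro h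
    exact X.mul_mem (X.mul_mem (X.inv_mem hx) h) hx

lemma cnj_of_mem_centralizer {c : G} {X : Subgroup G}
    (hc : c ∈ centralizer (X : Set G)) : cnj c X = X := by
  ext y
  rw [mem_cnj]
  constructor
  · intro h
    have hcomm := Subgroup.mem_centralizer_iff.mp hc _ h
    have e : y = c * (c⁻¹ * y * c) * c⁻¹ := by group
    rw [e, ← hcomm, mul_inv_cancel_right]
    exact h
  · intro h
    have hcomm := Subgroup.mem_centralizer_iff.mp hc _ h
    rw [mul_assoc, hcomm, inv_mul_cancel_left]
    exact h

lemma normal_of_cnj {X : Subgroup G} (h : ∀ g : G, cnj g X ≤ X) : X.Normal := by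
  constructor
  intro n hn g
  have : g * n * g⁻¹ ∈ cnj g X := mem_cnj.mpr (by
    have e : g⁻¹ * (g * n * g⁻¹) * g = n := by group
    rw [e]; exact hn)
  exact h g this

lemma cnj_eq_of_normal {X : Subgroup G} (hX : X.Normal) (g : G) : cnj g X = X := by
  refine le_antisymm ?_ ?_
  · intro y hy
    rw [mem_cnj] at hy
    have := hX.conj_mem _ hy g
    convert this using 1
    group
  · intro y hy
    rw [mem_cnj]
    have := hX.conj_mem _ hy g⁻¹
    convert this using 1
    group

lemma le_centralizer_comm {X Y : Subgroup G} :
    X ≤ centralizer (Y : Set G) ↔ Y ≤ centralizer (X : Set G) := le_centralizer_iff.symm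

lemma le_centralizer_centralizer' (X : Subgroup G) :
    X ≤ centralizer ((centralizer (X : Set G) : Subgroup G) : Set G) := by
  have := closure_le_centralizer_centralizer (X : Set G)
  rwa [Subgroup.closure_eq] at this

lemma centralizer_sup (X Y : Subgroup G) :
    centralizer ((X ⊔ Y : Subgroup G) : Set G) =
      centralizer (X : Set G) ⊓ centralizer (Y : Set G) := by
  refine le_antisymm (le_inf (centralizer_le ?_) (centralizer_le ?_)) ?_
  · exact SetLike.coe_subset_coe.mpr le_sup_left
  · exact SetLike.coe_subset_coe.mpr le_sup_right
  · intro z hz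
    have hle : X ⊔ Y ≤ centralizer ({z} : Set G) :=
      sup_le
        (fun x hx => mem_centralizer_singleton_iff.mpr
          (Subgroup.mem_centralizer_iff.mp (Subgroup.mem_inf.mp hz).1 x hx))
        (fun y hy => mem_centralizer_singleton_iff.mpr
          (Subgroup.mem_centralizer_iff.mp (Subgroup.mem_inf.mp hz).2 y hy))
    exact Subgroup.mem_centralizer_iff.mpr
      (fun h hh => mem_centralizer_singleton_iff.mp (hle hh))

lemma card_cnj (g : G) (X : Subgroup G) : Nat.card (cnj g X) = Nat.card X :=
  (Nat.card_congr (X.equivMapOfInjective (MulAut.conj g).toMonoidHom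
    (MulAut.conj g).injective).toEquiv).symm

lemma centralizer_cnj (g : G) (X : Subgroup G) :
    centralizer ((cnj g X : Subgroup G) : Set G) = cnj g (centralizer (X : Set G)) := by
  ext z
  rw [mem_cnj, Subgroup.mem_centralizer_iff, Subgroup.mem_centralizer_iff]
  constructor
  · intro h x hx
    have hy : g * x * g⁻¹ ∈ cnj g X := mem_cnj.mpr (by
      have e : g⁻¹ * (g * x * g⁻¹) * g = x := by group
      rw [e]; exact hx)
    have := h _ hy
    have e1 : x * (g⁻¹ * z * g) = g⁻¹ * ((g * x * g⁻¹) * z) * g := by group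
    have e2 : (g⁻¹ * z * g) * x = g⁻¹ * (z * (g * x * g⁻¹)) * g := by group
    rw [e1, e2, this]
  · intro h y hy
    rw [SetLike.mem_coe, mem_cnj] at hy
    have := h _ hy
    have e1 : y * z = g * ((g⁻¹ * y * g) * (g⁻¹ * z * g)) * g⁻¹ := by group
    have e2 : z * y = g * ((g⁻¹ * z * g) * (g⁻¹ * y * g)) * g⁻¹ := by group
    rw [e1, e2, this]

lemma dd_cnj (g : G) (X : Subgroup G) : dd (cnj g X) = dd X := by
  rw [dd, dd, card_cnj, centralizer_cnj, card_cnj]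

lemma IsM.cnj' {X : Subgroup G} (h : IsM X) (g : G) : IsM (cnj g X) := by
  intro Y
  rw [dd_cnj]
  exact h Y

variable [Finite G]

lemma dd_pos (X : Subgroup G) : 0 < dd X := Nat.mul_pos Nat.card_pos Nat.card_pos

lemma eq_of_le_of_card_le {X Y : Subgroup G} (h : X ≤ Y) (hc : Nat.card Y ≤ Nat.card X) :
    X = Y := by
  have hs : (X : Set G) = (Y : Set G) := by
    refine Set.eq_of_subset_of_ncard_le h ?_ (Y : Set G).toFinite
    rwa [← Nat.card_coe_set_eq, ← Nat.card_coe_set_eq, SetLike.coe_sort_coe,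
      SetLike.coe_sort_coe]
  exact SetLike.coe_injective hs

lemma mul_subset_of_le {X Y Z : Subgroup G} (h1 : X ≤ Z) (h2 : Y ≤ Z) :
    (X : Set G) * (Y : Set G) ⊆ (Z : Set G) := by
  rw [Set.mul_subset_iff]
  exact fun x hx y hy => Z.mul_mem (h1 hx) (h2 hy)

lemma card_set_le_of_subset {s t : Set G} (h : s ⊆ t) : Nat.card s ≤ Nat.card t := by
  rw [Nat.card_coe_set_eq, Nat.card_coe_set_eq]
  exact Set.ncard_le_ncard h t.toFinite

lemma set_eq_of_subset_of_card_le {s t : Set G} (h : s ⊆ t) (hc : Nat.card t ≤ Nat.card s) :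
    s = t := by
  refine Set.eq_of_subset_of_ncard_le h ?_ t.toFinite
  rwa [← Nat.card_coe_set_eq, ← Nat.card_coe_set_eq]

lemma card_set_pos {s : Set G} (h : s.Nonempty) : 0 < Nat.card s := by
  rw [Nat.card_coe_set_eq]
  exact (Set.ncard_pos s.toFinite).mpr h

/-- The product formula `|XY| * |X ⊓ Y| = |X| * |Y|`. -/
lemma card_mul_card_inf (X Y : Subgroup G) :
    Nat.card ((X : Set G) * (Y : Set G) : Set G) * Nat.card (X ⊓ Y : Subgroup G) =
      Nat.card X * Nat.card Y := by
  classical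
  have hchoose : ∀ z : ((X : Set G) * (Y : Set G) : Set G),
      ∃ p : G × G, p.1 ∈ X ∧ p.2 ∈ Y ∧ p.1 * p.2 = (z : G) := by
    rintro ⟨z, hz⟩
    obtain ⟨x, hx, y, hy, h⟩ := Set.mem_mul.mp hz
    exact ⟨(x, y), hx, hy, h⟩
  set S := (((X : Set G) * (Y : Set G) : Set G)) with hS
  let xf : S → G := fun z => (Classical.choose (hchoose z)).1
  let yf : S → G := fun z => (Classical.choose (hchoose z)).2
  have hxf : ∀ z : S, xf z ∈ X := fun z => (Classical.choose_spec (hchoose z)).1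
  have hyf : ∀ z : S, yf z ∈ Y := fun z => (Classical.choose_spec (hchoose z)).2.1
  have hmul : ∀ z : S, xf z * yf z = (z : G) :=
    fun z => (Classical.choose_spec (hchoose z)).2.2
  let Φ : S × ↥(X ⊓ Y) → ↥X × ↥Y := fun p =>
    (⟨xf p.1 * (p.2 : G), X.mul_mem (hxf p.1) (Subgroup.mem_inf.mp p.2.2).1⟩,
     ⟨(p.2 : G)⁻¹ * yf p.1, Y.mul_mem (Y.inv_mem (Subgroup.mem_inf.mp p.2.2).2) (hyf p.1)⟩)
  have hbij : Function.Bijective Φ := by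
    constructor
    · rintro ⟨z, d⟩ ⟨z', d'⟩ h
      have h1 : xf z * (d : G) = xf z' * (d' : G) := congrArg (fun q => (q.1 : G)) h
      have h2 : (d : G)⁻¹ * yf z = (d' : G)⁻¹ * yf z' := congrArg (fun q => (q.2 : G)) h
      have hz : (z : G) = (z' : G) := by
        calc (z : G) = (xf z * (d : G)) * ((d : G)⁻¹ * yf z) := by
              rw [← hmul z]; group
        _ = (xf z' * (d' : G)) * ((d' : G)⁻¹ * yf z') := by rw [h1, h2]
        _ = (z' : G) := by rw [← hmul z']; group
      have hzz : z = z' := Subtype.ext hz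
      subst hzz
      have hd : (d : G) = (d' : G) := mul_left_cancel h1
      exact Prod.ext rfl (Subtype.ext hd)
    · rintro ⟨x, y⟩
      have hz : ((x : G) * (y : G)) ∈ S := Set.mul_mem_mul x.2 y.2
      set z : S := ⟨(x : G) * (y : G), hz⟩ with hzdef
      have key : xf z * yf z = (x : G) * (y : G) := hmul z
      have hd1 : (xf z)⁻¹ * (x : G) ∈ X := X.mul_mem (X.inv_mem (hxf z)) x.2
      have hd2 : (xf z)⁻¹ * (x : G) ∈ Y := by
        have e1 : xf z * ((xf z)⁻¹ * (x : G)) = (x : G) := by group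
        have e2 : xf z * (yf z * (y : G)⁻¹) = (x : G) := by
          rw [← mul_assoc, key]; group
        have : (xf z)⁻¹ * (x : G) = yf z * (y : G)⁻¹ := mul_left_cancel (e1.trans e2.symm)
        rw [this]
        exact Y.mul_mem (hyf z) (Y.inv_mem y.2)
      refine ⟨⟨z, ⟨(xf z)⁻¹ * (x : G), Subgroup.mem_inf.mpr ⟨hd1, hd2⟩⟩⟩, ?_⟩
      refine Prod.ext (Subtype.ext ?_) (Subtype.ext ?_)
      · show xf z * ((xf z)⁻¹ * (x : G)) = (x : G)
        group
      · show ((xf z)⁻¹ * (x : G))⁻¹ * yf z = (y : G)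
        rw [mul_inv_rev, inv_inv, mul_assoc]
        calc (x : G)⁻¹ * ((xf z) * yf z) = (x : G)⁻¹ * ((x : G) * (y : G)) := by rw [key]
        _ = (y : G) := by group
  have := Nat.card_congr (Equiv.ofBijective Φ hbij)
  rw [Nat.card_prod, Nat.card_prod] at this
  exact this

lemma card_mul_of_inf_bot {X Y : Subgroup G} (h : X ⊓ Y = ⊥) :
    Nat.card ((X : Set G) * (Y : Set G) : Set G) = Nat.card X * Nat.card Y := by
  have := card_mul_card_inf X Y
  rw [h] at this
  simpa using this

lemma arith {m p a q cs s ci : ℕ} (ha : 0 < a) (hcs : 0 < cs) (hq : 0 < q) (hs : 0 < s)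
    (hm : 0 < m) (E0 : (p * a) * (q * cs) = m * m) (h3 : p ≤ s) (h4 : q ≤ ci)
    (hI : a * ci ≤ m) (hS : s * cs ≤ m) :
    a * ci = m ∧ s * cs = m ∧ p = s := by
  have hci : 0 < ci := lt_of_lt_of_le hq h4
  have k1 : m * m ≤ (a * ci) * (s * cs) := by
    calc m * m = (p * a) * (q * cs) := E0.symm
    _ ≤ (s * a) * (ci * cs) :=
      Nat.mul_le_mul (Nat.mul_le_mul_right a h3) (Nat.mul_le_mul_right cs h4)
    _ = (a * ci) * (s * cs) := by ring
  have k3 : (a * ci) * (s * cs) = m * m := le_antisymm (Nat.mul_le_mul hI hS) k1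
  have e1 : a * ci = m := by
    by_contra hne
    have hlt : a * ci < m := lt_of_le_of_ne hI hne
    have hpos : 0 < s * cs := Nat.mul_pos hs hcs
    have : (a * ci) * (s * cs) < m * m :=
      lt_of_lt_of_le ((Nat.mul_lt_mul_right hpos).mpr hlt) (Nat.mul_le_mul_left m hS)
    omega
  have e2 : s * cs = m := by
    have := k3
    rw [e1] at this
    exact Nat.eq_of_mul_eq_mul_left hm this
  refine ⟨e1, e2, ?_⟩
  have l2 : (p * a) * (ci * cs) = m * m := by
    refine le_antisymm ?_ ?_
    · calc (p * a) * (ci * cs) ≤ (s * a) * (ci * cs) :=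
        Nat.mul_le_mul_right _ (Nat.mul_le_mul_right a h3)
      _ = (a * ci) * (s * cs) := by ring
      _ = m * m := k3
    · calc m * m = (p * a) * (q * cs) := E0.symm
      _ ≤ (p * a) * (ci * cs) := Nat.mul_le_mul_left _ (Nat.mul_le_mul_right cs h4)
  have l3 : (p * a) * (ci * cs) = (s * a) * (ci * cs) := by
    rw [l2]
    calc m * m = (a * ci) * (s * cs) := k3.symm
    _ = (s * a) * (ci * cs) := by ring
  have l4 : p * a = s * a := Nat.eq_of_mul_eq_mul_right (Nat.mul_pos hci hcs) l3
  exact Nat.eq_of_mul_eq_mul_right ha l4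

/-- The key Chermak–Delgado lemma: meets and joins of measure-maximizers are
measure-maximizers, and the join is the set-product. -/
lemma key {X Y : Subgroup G} (hX : IsM X) (hY : IsM Y) :
    IsM (X ⊓ Y) ∧ IsM (X ⊔ Y) ∧
      (((X ⊔ Y : Subgroup G) : Set G) = (X : Set G) * (Y : Set G)) ∧
      Nat.card (X ⊔ Y : Subgroup G) * Nat.card (X ⊓ Y : Subgroup G) =
        Nat.card X * Nat.card Y := by
  have hXY : dd Y = dd X := le_antisymm (hX Y) (hY X)
  have h1 : Nat.card ((X : Set G) * (Y : Set G) : Set G) * Nat.card (X ⊓ Y : Subgroup G) =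
      Nat.card X * Nat.card Y := card_mul_card_inf X Y
  have h2 : Nat.card ((centralizer (X : Set G) : Set G) * (centralizer (Y : Set G) : Set G) : Set G) *
      Nat.card (centralizer ((X ⊔ Y : Subgroup G) : Set G)) =
      Nat.card (centralizer (X : Set G) : Subgroup G) * Nat.card (centralizer (Y : Set G) : Subgroup G) := by
    have := card_mul_card_inf (centralizer (X : Set G)) (centralizer (Y : Set G))
    rwa [← centralizer_sup] at this
  have h3 : Nat.card ((X : Set G) * (Y : Set G) : Set G) ≤ Nat.card (X ⊔ Y : Subgroup G) :=
    card_set_le_of_subset (mul_subset_of_le le_sup_left le_sup_right)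
  have h4 : Nat.card ((centralizer (X : Set G) : Set G) * (centralizer (Y : Set G) : Set G) : Set G) ≤
      Nat.card (centralizer ((X ⊓ Y : Subgroup G) : Set G)) :=
    card_set_le_of_subset (mul_subset_of_le
      (centralizer_le (SetLike.coe_subset_coe.mpr inf_le_left))
      (centralizer_le (SetLike.coe_subset_coe.mpr inf_le_right)))
  have hq : 0 < Nat.card
      ((centralizer (X : Set G) : Set G) * (centralizer (Y : Set G) : Set G) : Set G) :=
    card_set_pos ⟨(1 : G), by
      simpa using Set.mul_mem_mul (centralizer (X : Set G)).one_mem (centralizer (Y : Set G)).one_mem⟩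
  have E0 : (Nat.card ((X : Set G) * (Y : Set G) : Set G) * Nat.card (X ⊓ Y : Subgroup G)) *
      (Nat.card ((centralizer (X : Set G) : Set G) * (centralizer (Y : Set G) : Set G) : Set G) *
        Nat.card (centralizer ((X ⊔ Y : Subgroup G) : Set G))) = dd X * dd X := by
    rw [h1, h2]
    have : dd X * dd X = dd X * dd Y := by rw [hXY]
    rw [this]
    simp only [dd]
    ring
  obtain ⟨eI, eS, ePS⟩ := arith (m := dd X)
    (ha := Nat.card_pos) (hcs := Nat.card_pos) (hq := hq) (hs := Nat.card_pos)
    (hm := dd_pos X) (E0 := E0) (h3 := h3) (h4 := h4)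
    (hI := hX (X ⊓ Y)) (hS := hX (X ⊔ Y))
  -- note: a * ci = dd (X ⊓ Y), s * cs = dd (X ⊔ Y) by definition
  have hinfM : IsM (X ⊓ Y) := by
    intro Z
    exact le_of_le_of_eq (hX Z) eI.symm
  have hsupM : IsM (X ⊔ Y) := by
    intro Z
    exact le_of_le_of_eq (hX Z) eS.symm
  have hset : ((X ⊔ Y : Subgroup G) : Set G) = (X : Set G) * (Y : Set G) := by
    refine (set_eq_of_subset_of_card_le (mul_subset_of_le le_sup_left le_sup_right) ?_).symm
    rw [ePS]
    exact le_rfl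
  refine ⟨hinfM, hsupM, hset, ?_⟩
  rw [← ePS]
  exact h1

lemma isM_centralizer {X : Subgroup G} (hX : IsM X) :
    IsM (centralizer (X : Set G)) ∧
      centralizer ((centralizer (X : Set G) : Subgroup G) : Set G) = X := by
  have hle : X ≤ centralizer ((centralizer (X : Set G) : Subgroup G) : Set G) :=
    le_centralizer_centralizer' X
  have hcard : Nat.card X ≤
      Nat.card (centralizer ((centralizer (X : Set G) : Subgroup G) : Set G)) :=
    Subgroup.card_le_of_le hle
  have hdd : dd X ≤ dd (centralizer (X : Set G)) := by
    rw [dd, dd]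
    calc Nat.card X * Nat.card (centralizer (X : Set G)) =
        Nat.card (centralizer (X : Set G)) * Nat.card X := by ring
    _ ≤ _ := Nat.mul_le_mul_left _ hcard
  have hM : IsM (centralizer (X : Set G)) := fun Y => le_trans (hX Y) hdd
  have hdd2 : dd (centralizer (X : Set G)) = dd X := le_antisymm (hX _) hdd
  have hc2 : Nat.card (centralizer ((centralizer (X : Set G) : Subgroup G) : Set G)) =
      Nat.card X := by
    have := hdd2
    rw [dd, dd] at this
    have h' : Nat.card (centralizer (X : Set G)) *
        Nat.card (centralizer ((centralizer (X : Set G) : Subgroup G) : Set G)) =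
        Nat.card (centralizer (X : Set G)) * Nat.card X := by
      calc Nat.card (centralizer (X : Set G)) *
          Nat.card (centralizer ((centralizer (X : Set G) : Subgroup G) : Set G)) = dd (centralizer (X : Set G)) := rfl
      _ = dd X := hdd2
      _ = Nat.card (centralizer (X : Set G)) * Nat.card X := by rw [dd]; ring
    exact Nat.eq_of_mul_eq_mul_left Nat.card_pos h'
  exact ⟨hM, (eq_of_le_of_card_le hle (le_of_eq hc2)).symm⟩

lemma exists_minimal (P : Subgroup G → Prop) (h : ∃ X, P X) :
    ∃ X, P X ∧ ∀ Y, P Y → Nat.card X ≤ Nat.card Y := by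
  classical
  set s : Set ℕ := {n | ∃ X, P X ∧ Nat.card X = n} with hs
  have hne : s.Nonempty := by
    obtain ⟨X, hX⟩ := h
    exact ⟨Nat.card X, X, hX, rfl⟩
  obtain ⟨X, hX, hcard⟩ := Nat.sInf_mem hne
  exact ⟨X, hX, fun Y hY => hcard ▸ Nat.sInf_le ⟨Y, hY, rfl⟩⟩

lemma exists_maximal (P : Subgroup G → Prop) (h : ∃ X, P X) :
    ∃ X, P X ∧ ∀ Y, P Y → Nat.card Y ≤ Nat.card X := by
  classical
  set s : Set ℕ := {n | ∃ X, P X ∧ Nat.card X = n} with hs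
  have hne : s.Nonempty := by
    obtain ⟨X, hX⟩ := h
    exact ⟨Nat.card X, X, hX, rfl⟩
  have hbdd : BddAbove s := by
    refine ⟨Nat.card G, ?_⟩
    rintro n ⟨X, _, rfl⟩
    calc Nat.card X ≤ Nat.card (⊤ : Subgroup G) := Subgroup.card_le_of_le le_top
    _ = Nat.card G := Subgroup.card_top
  obtain ⟨X, hX, hcard⟩ := Nat.sSup_mem hne hbdd
  exact ⟨X, hX, fun Y hY => hcard ▸ le_csSup hbdd ⟨Y, hY, rfl⟩⟩

lemma dd_bot : dd (⊥ : Subgroup G) = Nat.card G := by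
  have hc : centralizer (((⊥ : Subgroup G)) : Set G) = ⊤ := by
    rw [eq_top_iff']
    intro x
    rw [Subgroup.mem_centralizer_iff]
    intro y hy
    simp only [Subgroup.coe_bot, Set.mem_singleton_iff] at hy
    subst hy
    group
  simp only [dd]
  rw [hc, Subgroup.card_top]
  simp

/-- In a group with no nontrivial abelian normal subgroup, the maximal measure is `|G|`,
so `⊥` is a maximizer. -/
lemma isM_bot (hG : ∀ N : Subgroup G, N.Normal → IsMulCommutative N → N = ⊥)
    {H₀ : Subgroup G} (h₀ : IsM H₀) : IsM (⊥ : Subgroup G) := by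
  obtain ⟨M, ⟨hM, hMmin⟩⟩ := exists_minimal IsM ⟨H₀, h₀⟩
  have hMle : ∀ X, IsM X → M ≤ X := by
    intro X hX
    have hinf : IsM (M ⊓ X) := (key hM hX).1
    have h1 : Nat.card M ≤ Nat.card (M ⊓ X : Subgroup G) := hMmin _ hinf
    have h2 : M ⊓ X = M := eq_of_le_of_card_le inf_le_left h1
    rw [← h2]
    exact inf_le_right
  have hab : M ≤ centralizer (M : Set G) := hMle _ (isM_centralizer hM).1
  have hnormal : M.Normal := by
    refine normal_of_cnj ?_
    intro g
    have h1 : M ≤ cnj g M := hMle _ (hM.cnj' g)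
    have h2 : M = cnj g M := eq_of_le_of_card_le h1 (le_of_eq (card_cnj g M))
    rw [← h2]
  have hcomm : IsMulCommutative M := le_centralizer_iff_isMulCommutative.mp hab
  have hbot : M = ⊥ := hG M hnormal hcomm
  rw [← hbot]
  exact hM

lemma dd_eq_card_of_isM (hG : ∀ N : Subgroup G, N.Normal → IsMulCommutative N → N = ⊥)
    {X : Subgroup G} (hX : IsM X) : dd X = Nat.card G := by
  have hb := isM_bot hG hX
  have h := le_antisymm (hb X) (hX ⊥)
  exact h ▸ dd_bot


lemma card_subgroupOf {K N : Subgroup G} (h : K ≤ N) :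
    Nat.card (K.subgroupOf N) = Nat.card K :=
  Nat.card_congr (Subgroup.subgroupOfEquivOfLe h).toEquiv

lemma centralizer_subgroupOf {K N : Subgroup G} (h : K ≤ N) :
    Subgroup.centralizer ((K.subgroupOf N : Subgroup N) : Set N) =
      (Subgroup.centralizer (K : Set G) ⊓ N).subgroupOf N := by
  ext n
  rw [Subgroup.mem_subgroupOf, Subgroup.mem_inf, Subgroup.mem_centralizer_iff,
    Subgroup.mem_centralizer_iff]
  constructor
  · intro hc
    refine ⟨fun x hx => ?_, n.2⟩
    have hmem : (⟨x, h hx⟩ : N) ∈ (K.subgroupOf N : Subgroup N) := by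
      rwa [Subgroup.mem_subgroupOf]
    have := hc _ hmem
    exact Subtype.ext_iff.mp this
  · rintro ⟨hc, -⟩ x hx
    rw [SetLike.mem_coe, Subgroup.mem_subgroupOf] at hx
    exact Subtype.ext (hc _ hx)

lemma map_subtype_card (N : Subgroup G) (K : Subgroup N) :
    Nat.card (Subgroup.map N.subtype K) = Nat.card K :=
  (Nat.card_congr (K.equivMapOfInjective N.subtype N.subtype_injective).toEquiv).symm

lemma cnj_inf {G : Type*} [Group G] (g : G) (A B : Subgroup G) :
    cnj g (A ⊓ B) = cnj g A ⊓ cnj g B := by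
  ext y
  simp [mem_cnj, Subgroup.mem_inf]

lemma centralizer_normal_of_normal {G : Type*} [Group G] {X : Subgroup G} (hX : X.Normal) :
    (centralizer (X : Set G)).Normal := by
  refine normal_of_cnj (fun g => ?_)
  have h := centralizer_cnj g X
  rw [cnj_eq_of_normal hX g] at h
  exact le_of_eq h.symm

lemma cnj_le_normalClosure {G : Type*} [Group G] (g : G) (X : Subgroup G) :
    cnj g X ≤ Subgroup.normalClosure (X : Set G) := by
  intro y hy
  have hx : g⁻¹ * y * g ∈ X := mem_cnj.mp hy
  have h1 : g⁻¹ * y * g ∈ Subgroup.normalClosure (X : Set G) :=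
    Subgroup.subset_normalClosure hx
  have h2 := Subgroup.normalClosure_normal.conj_mem _ h1 g
  have e : g * (g⁻¹ * y * g) * g⁻¹ = y := by group
  rwa [e] at h2

universe u

/-- Core lemma: in a finite group with no nontrivial abelian normal subgroup, any
measure-maximizing subgroup contained in its own centralizer is trivial. -/
theorem crux : ∀ (n : ℕ) (G : Type u) (_ : Group G) (_ : Finite G), Nat.card G = n →
    (∀ B : Subgroup G, B.Normal → IsMulCommutative B → B = ⊥) →
    ∀ W : Subgroup G, IsM W → W ≤ Subgroup.centralizer (W : Set G) → W = ⊥ := by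
  intro n
  induction n using Nat.strong_induction_on with
  | _ n IH =>
  intro G _ _ hn hG W₀ hW₀M hW₀ab
  by_contra hW₀ne
  obtain ⟨W, ⟨hWM, hWab, hWne⟩, hWmin⟩ :=
    exists_minimal (fun X => IsM X ∧ X ≤ centralizer (X : Set G) ∧ X ≠ ⊥)
      ⟨W₀, hW₀M, hW₀ab, hW₀ne⟩
  -- dichotomy via minimality
  have hdich : ∀ X : Subgroup G, IsM X → X ≤ centralizer (X : Set G) →
      X = ⊥ ∨ Nat.card W ≤ Nat.card X := by
    intro X h1 h2
    by_cases h : X = ⊥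
    · exact Or.inl h
    · exact Or.inr (hWmin X ⟨h1, h2, h⟩)
  -- construct N = normal closure of W as a measure maximizer
  obtain ⟨N, ⟨hNM, hWN, hNle⟩, hNmax⟩ :=
    exists_maximal (fun Y => IsM Y ∧ W ≤ Y ∧ Y ≤ Subgroup.normalClosure (W : Set G))
      ⟨W, hWM, le_refl W, Subgroup.le_normalClosure⟩
  have habsorb : ∀ Y : Subgroup G, IsM Y → Y ≤ Subgroup.normalClosure (W : Set G) →
      Y ≤ N := by
    intro Y hYM hYle
    have hM := (key hNM hYM).2.1
    have hle : N ⊔ Y ≤ Subgroup.normalClosure (W : Set G) := sup_le hNle hYle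
    have hcard : Nat.card (N ⊔ Y : Subgroup G) ≤ Nat.card N :=
      hNmax _ ⟨hM, le_trans hWN le_sup_left, hle⟩
    have : N = N ⊔ Y := eq_of_le_of_card_le le_sup_left hcard
    rw [this]
    exact le_sup_right
  have hconjW : ∀ g : G, cnj g W ≤ N :=
    fun g => habsorb _ (hWM.cnj' g) (cnj_le_normalClosure g W)
  have hNnormal : N.Normal := by
    refine normal_of_cnj (fun g => ?_)
    refine habsorb _ (hNM.cnj' g) ?_
    have h1 : cnj g N ≤ cnj g (Subgroup.normalClosure (W : Set G)) := cnj_mono g hNle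
    rwa [cnj_eq_of_normal Subgroup.normalClosure_normal g] at h1
  have hNncl : N = Subgroup.normalClosure (W : Set G) := by
    haveI := hNnormal
    exact le_antisymm hNle (Subgroup.normalClosure_le_normal hWN)
  -- Z(N) = N ⊓ C(N) is trivial
  have hCNM : IsM (centralizer (N : Set G)) := (isM_centralizer hNM).1
  have hZM : IsM (N ⊓ centralizer (N : Set G)) := (key hNM hCNM).1
  have hZnormal : (N ⊓ centralizer (N : Set G)).Normal := by
    refine normal_of_cnj (fun g => ?_)
    rw [cnj_inf, cnj_eq_of_normal hNnormal,
      cnj_eq_of_normal (centralizer_normal_of_normal hNnormal)]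
  have hZab : N ⊓ centralizer (N : Set G) ≤
      centralizer ((N ⊓ centralizer (N : Set G) : Subgroup G) : Set G) := by
    intro x hx
    refine Subgroup.mem_centralizer_iff.mpr (fun y hy => ?_)
    have hxC : x ∈ centralizer (N : Set G) := (Subgroup.mem_inf.mp hx).2
    have hyN : y ∈ N := (Subgroup.mem_inf.mp hy).1
    exact Subgroup.mem_centralizer_iff.mp hxC y hyN
  have hZbot : N ⊓ centralizer (N : Set G) = ⊥ :=
    hG _ hZnormal (le_centralizer_iff_isMulCommutative.mp hZab)
  -- |N| * |C(N)| = |G| and N·C(N) = G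
  have hcardNC : Nat.card N * Nat.card (centralizer (N : Set G)) = Nat.card G :=
    dd_eq_card_of_isM hG hNM
  have hcarduniv : Nat.card (Set.univ : Set G) = Nat.card G := by
    rw [Nat.card_coe_set_eq, Set.ncard_univ]
  have huniv : (N : Set G) * (centralizer (N : Set G) : Set G) = Set.univ := by
    refine set_eq_of_subset_of_card_le (Set.subset_univ _) ?_
    rw [hcarduniv, card_mul_of_inf_bot hZbot]
    exact le_of_eq hcardNC.symm
  -- Case 1 : N ≠ ⊤ : descend into N
  by_cases hNtop : N = ⊤
  case neg =>
    have hWleN : W ≤ N := hWN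
    have hcardlt : Nat.card N < n := by
      rw [← hn]
      have hle : Nat.card N ≤ Nat.card G :=
        le_of_le_of_eq (Subgroup.card_le_of_le le_top) Subgroup.card_top
      exact lt_of_le_of_ne hle (fun hEq => hNtop ((Subgroup.card_eq_iff_eq_top N).mp hEq))
    -- no nontrivial abelian normal subgroups in N
    have hG' : ∀ B : Subgroup N, B.Normal → IsMulCommutative B → B = ⊥ := by
      intro B hBnorm hBcomm
      set B' := Subgroup.map N.subtype B with hB'
      have hB'leN : B' ≤ N := Subgroup.map_subtype_le B
      have hB'norm : B'.Normal := by
        constructor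
        intro b hb g
        have hgmem : g ∈ (N : Set G) * (centralizer (N : Set G) : Set G) := by
          rw [huniv]; trivial
        obtain ⟨p, hp, c, hc, hpc⟩ := Set.mem_mul.mp hgmem
        have hbN : b ∈ N := hB'leN hb
        have hcb : c * b * c⁻¹ = b := by
          have h := Subgroup.mem_centralizer_iff.mp hc b hbN
          rw [← h, mul_inv_cancel_right]
        have hpb : p * b * p⁻¹ ∈ B' := by
          obtain ⟨b', hb', rfl⟩ := hb
          have hmem := hBnorm.conj_mem b' hb' ⟨p, hp⟩
          exact ⟨_, hmem, rfl⟩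
        have he : g * b * g⁻¹ = p * (c * b * c⁻¹) * p⁻¹ := by rw [← hpc]; group
        rw [he, hcb]
        exact hpb
      have hB'comm : IsMulCommutative B' := by
        rw [← le_centralizer_iff_isMulCommutative]
        intro x hx
        refine Subgroup.mem_centralizer_iff.mpr (fun y hy => ?_)
        rw [SetLike.mem_coe] at hy
        obtain ⟨x', hx', rfl⟩ := hx
        obtain ⟨y', hy', rfl⟩ := hy
        haveI := hBcomm
        have hc := Subgroup.mem_centralizer_iff.mp (Subgroup.le_centralizer B hx') y' hy'
        exact congrArg Subtype.val hc
      have hB'bot : B' = ⊥ := hG B' hB'norm hB'comm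
      rwa [Subgroup.map_eq_bot_iff_of_injective B N.subtype_injective] at hB'bot
    -- W (as a subgroup of N) is a measure maximizer in N
    have hsubCent : ∀ K : Subgroup G, K ≤ N →
        Nat.card (centralizer (K : Set G) ⊓ N : Subgroup G) *
          Nat.card (centralizer (N : Set G)) ≤ Nat.card (centralizer (K : Set G)) := by
      intro K hK
      have hinfbot : (centralizer (K : Set G) ⊓ N) ⊓ centralizer (N : Set G) = ⊥ := by
        rw [← le_bot_iff, ← hZbot]
        exact inf_le_inf_right (Subgroup.centralizer (N : Set G)) inf_le_right
      rw [← card_mul_of_inf_bot hinfbot]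
      exact card_set_le_of_subset (mul_subset_of_le inf_le_left
        (centralizer_le (SetLike.coe_subset_coe.mpr hK)))
    have hup : ∀ K : Subgroup G, K ≤ N →
        Nat.card K * Nat.card (centralizer (K : Set G) ⊓ N : Subgroup G) ≤ Nat.card N := by
      intro K hK
      have hCN : 0 < Nat.card (centralizer (N : Set G)) := Nat.card_pos
      refine Nat.le_of_mul_le_mul_right ?_ hCN
      calc Nat.card K * Nat.card (centralizer (K : Set G) ⊓ N : Subgroup G) *
          Nat.card (centralizer (N : Set G))
          = Nat.card K * (Nat.card (centralizer (K : Set G) ⊓ N : Subgroup G) *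
            Nat.card (centralizer (N : Set G))) := by ring
      _ ≤ Nat.card K * Nat.card (centralizer (K : Set G)) :=
          Nat.mul_le_mul_left _ (hsubCent K hK)
      _ ≤ Nat.card G := le_of_le_of_eq ((isM_bot hG hNM) K) dd_bot
      _ = Nat.card N * Nat.card (centralizer (N : Set G)) := hcardNC.symm
    have hWeq : Nat.card W * Nat.card (centralizer (W : Set G) ⊓ N : Subgroup G) =
        Nat.card N := by
      refine le_antisymm (hup W hWleN) ?_
      -- C(W) ⊆ (C(W) ⊓ N) · C(N)
      have hsub : (centralizer (W : Set G) : Set G) ⊆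
          ((centralizer (W : Set G) ⊓ N : Subgroup G) : Set G) *
            (centralizer (N : Set G) : Set G) := by
        intro c hc
        have hcuniv : c ∈ (N : Set G) * (centralizer (N : Set G) : Set G) := by
          rw [huniv]; trivial
        obtain ⟨p, hp, z, hz, hpz⟩ := Set.mem_mul.mp hcuniv
        have hzCW : z ∈ centralizer (W : Set G) :=
          centralizer_le (SetLike.coe_subset_coe.mpr hWleN) hz
        have hpCW : p ∈ centralizer (W : Set G) := by
          have he : p = c * z⁻¹ := by rw [← hpz]; group
          rw [he]
          exact mul_mem hc (inv_mem hzCW)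
        exact Set.mem_mul.mpr ⟨p, Subgroup.mem_inf.mpr ⟨hpCW, hp⟩, z, hz, hpz⟩
      have hinfbot : (centralizer (W : Set G) ⊓ N) ⊓ centralizer (N : Set G) = ⊥ := by
        rw [← le_bot_iff, ← hZbot]
        exact inf_le_inf_right (Subgroup.centralizer (N : Set G)) inf_le_right
      have hcardle : Nat.card (centralizer (W : Set G)) ≤
          Nat.card (centralizer (W : Set G) ⊓ N : Subgroup G) *
            Nat.card (centralizer (N : Set G)) := by
        rw [← card_mul_of_inf_bot hinfbot]
        exact card_set_le_of_subset hsub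
      have hdW : Nat.card W * Nat.card (centralizer (W : Set G)) = Nat.card G :=
        dd_eq_card_of_isM hG hWM
      have hCN : 0 < Nat.card (centralizer (N : Set G)) := Nat.card_pos
      refine Nat.le_of_mul_le_mul_right ?_ hCN
      calc Nat.card N * Nat.card (centralizer (N : Set G)) = Nat.card G := hcardNC
      _ = Nat.card W * Nat.card (centralizer (W : Set G)) := hdW.symm
      _ ≤ Nat.card W * (Nat.card (centralizer (W : Set G) ⊓ N : Subgroup G) *
            Nat.card (centralizer (N : Set G))) := Nat.mul_le_mul_left _ hcardle
      _ = Nat.card W * Nat.card (centralizer (W : Set G) ⊓ N : Subgroup G) *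
            Nat.card (centralizer (N : Set G)) := by ring
    have hWM' : IsM (W.subgroupOf N) := by
      intro K'
      have hKle : Subgroup.map N.subtype K' ≤ N := Subgroup.map_subtype_le K'
      have hre : K' = (Subgroup.map N.subtype K').subgroupOf N := by
        rw [Subgroup.subgroupOf, Subgroup.comap_map_eq_self_of_injective N.subtype_injective]
      have hddK : dd K' = Nat.card (Subgroup.map N.subtype K') *
          Nat.card (centralizer ((Subgroup.map N.subtype K' : Subgroup G) : Set G) ⊓ N :
            Subgroup G) := by
        rw [dd]
        congr 1
        · conv_lhs => rw [hre]
          exact card_subgroupOf hKle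
        · conv_lhs => rw [hre, centralizer_subgroupOf hKle]
          exact card_subgroupOf inf_le_right
      have hddW : dd (W.subgroupOf N) = Nat.card W *
          Nat.card (centralizer (W : Set G) ⊓ N : Subgroup G) := by
        rw [dd]
        congr 1
        · exact card_subgroupOf hWleN
        · conv_lhs => rw [centralizer_subgroupOf hWleN]
          exact card_subgroupOf inf_le_right
      rw [hddK, hddW, hWeq]
      exact hup _ hKle
    have hWab' : W.subgroupOf N ≤ centralizer ((W.subgroupOf N : Subgroup N) : Set N) := by
      rw [centralizer_subgroupOf hWleN]
      exact Subgroup.comap_mono (le_inf hWab hWleN)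
    have hWbot' : W.subgroupOf N = ⊥ :=
      IH (Nat.card N) hcardlt N inferInstance inferInstance rfl hG' (W.subgroupOf N) hWM' hWab'
    have hWbot : W = ⊥ := (Subgroup.subgroupOf_eq_bot.mp hWbot').eq_bot_of_le hWleN
    exact hWne hWbot
  -- Case 2 : N = ⊤ : all conjugates of W centralize W, so W ≤ Z(G) = ⊥
  case pos =>
  have hclaim : ∀ g : G, cnj g W ≤ centralizer (W : Set G) := by
    intro g
    by_cases hgW : cnj g W = W
    · rw [hgW]; exact hWab
    -- W ⊓ W^g = ⊥
    have hEM : IsM (W ⊓ cnj g W) := (key hWM (hWM.cnj' g)).1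
    have hEab : W ⊓ cnj g W ≤ centralizer ((W ⊓ cnj g W : Subgroup G) : Set G) :=
      le_trans inf_le_left (le_trans hWab
        (centralizer_le (SetLike.coe_subset_coe.mpr inf_le_left)))
    have hEbot : W ⊓ cnj g W = ⊥ := by
      rcases hdich _ hEM hEab with h | h
      · exact h
      · exfalso
        have hEW : W ⊓ cnj g W = W := eq_of_le_of_card_le inf_le_left h
        have hle : W ≤ cnj g W := by
          conv_lhs => rw [← hEW]
          exact inf_le_right
        have : W = cnj g W :=
          eq_of_le_of_card_le hle (le_of_eq (card_cnj g W))
        exact hgW this.symm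
    -- P = W ⊔ W^g has |P| = |W|²
    have hPM : IsM (W ⊔ cnj g W) := (key hWM (hWM.cnj' g)).2.1
    have hPset : ((W ⊔ cnj g W : Subgroup G) : Set G) = (W : Set G) * (cnj g W : Set G) :=
      (key hWM (hWM.cnj' g)).2.2.1
    have hPcard : Nat.card (W ⊔ cnj g W : Subgroup G) = Nat.card W * Nat.card W := by
      have h := (key hWM (hWM.cnj' g)).2.2.2
      rw [hEbot, card_cnj] at h
      simpa using h
    -- Z = Z(P)
    have hCPM : IsM (centralizer ((W ⊔ cnj g W : Subgroup G) : Set G)) :=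
      (isM_centralizer hPM).1
    have hZPM : IsM ((W ⊔ cnj g W) ⊓ centralizer ((W ⊔ cnj g W : Subgroup G) : Set G)) :=
      (key hPM hCPM).1
    have hZPab : (W ⊔ cnj g W) ⊓ centralizer ((W ⊔ cnj g W : Subgroup G) : Set G) ≤
        centralizer (((W ⊔ cnj g W) ⊓ centralizer ((W ⊔ cnj g W : Subgroup G) : Set G) :
          Subgroup G) : Set G) := by
      intro x hx
      refine Subgroup.mem_centralizer_iff.mpr (fun y hy => ?_)
      have hxC : x ∈ centralizer ((W ⊔ cnj g W : Subgroup G) : Set G) :=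
        (Subgroup.mem_inf.mp hx).2
      have hyP : y ∈ (W ⊔ cnj g W : Subgroup G) := (Subgroup.mem_inf.mp hy).1
      exact Subgroup.mem_centralizer_iff.mp hxC y hyP
    by_cases hZPbot : (W ⊔ cnj g W) ⊓ centralizer ((W ⊔ cnj g W : Subgroup G) : Set G) = ⊥
    · -- P is normal, hence P = ⊤, so G = W · W^g and we get a contradiction
      exfalso
      have hPC : ((W ⊔ cnj g W : Subgroup G) : Set G) *
          (centralizer ((W ⊔ cnj g W : Subgroup G) : Set G) : Set G) = Set.univ := by
        refine set_eq_of_subset_of_card_le (Set.subset_univ _) ?_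
        rw [hcarduniv, card_mul_of_inf_bot hZPbot]
        exact le_of_eq (dd_eq_card_of_isM hG hPM).symm
      have hPnormal : (W ⊔ cnj g W : Subgroup G).Normal := by
        refine normal_of_cnj (fun x => ?_)
        have hx : x ∈ ((W ⊔ cnj g W : Subgroup G) : Set G) *
            (centralizer ((W ⊔ cnj g W : Subgroup G) : Set G) : Set G) := by
          rw [hPC]; trivial
        obtain ⟨p, hp, c, hc, hpc⟩ := Set.mem_mul.mp hx
        have : cnj x (W ⊔ cnj g W) = W ⊔ cnj g W := by
          rw [← hpc, ← cnj_cnj, cnj_of_mem_centralizer hc, cnj_of_mem hp]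
        exact le_of_eq this
      have hPtop : (W ⊔ cnj g W : Subgroup G) = ⊤ := by
        haveI := hPnormal
        have h1 : Subgroup.normalClosure (W : Set G) ≤ W ⊔ cnj g W :=
          Subgroup.normalClosure_le_normal (SetLike.coe_subset_coe.mpr le_sup_left)
        rw [← hNncl, hNtop] at h1
        exact top_le_iff.mp h1
      have hWuniv : (W : Set G) * (cnj g W : Set G) = Set.univ := by
        rw [← hPset, hPtop]
        simp
      -- the conjugating trick
      have hginv : g⁻¹ ∈ (W : Set G) * (cnj g W : Set G) := by rw [hWuniv]; trivial
      obtain ⟨w, hw, v, hv, hwv⟩ := Set.mem_mul.mp hginv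
      have hg : g = v⁻¹ * w⁻¹ := by
        rw [← mul_inv_rev, hwv, inv_inv]
      have h1 : cnj g W = cnj v⁻¹ W := by
        rw [hg, ← cnj_cnj, cnj_of_mem (W.inv_mem hw)]
      have hvW : v ∈ W := by
        have hv' : v ∈ cnj v⁻¹ W := by
          rw [← h1]
          exact hv
        have := mem_cnj.mp hv'
        have e : (v⁻¹)⁻¹ * v * v⁻¹ = v := by group
        rwa [e] at this
      exact hgW (by rw [h1, cnj_of_mem (W.inv_mem hvW)])
    · -- Z(P) ≠ ⊥
      have hZW : Nat.card W ≤
          Nat.card ((W ⊔ cnj g W) ⊓ centralizer ((W ⊔ cnj g W : Subgroup G) : Set G) :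
            Subgroup G) := by
        rcases hdich _ hZPM hZPab with h | h
        · exact absurd h hZPbot
        · exact h
      set Z := (W ⊔ cnj g W) ⊓ centralizer ((W ⊔ cnj g W : Subgroup G) : Set G) with hZ
      -- dichotomy for Z ⊓ W
      have hZWM : IsM (Z ⊓ W) := (key hZPM hWM).1
      have hZWab : Z ⊓ W ≤ centralizer ((Z ⊓ W : Subgroup G) : Set G) :=
        le_trans inf_le_right (le_trans hWab
          (centralizer_le (SetLike.coe_subset_coe.mpr inf_le_right)))
      have hZWgM : IsM (Z ⊓ cnj g W) := (key hZPM (hWM.cnj' g)).1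
      have hZWgab : Z ⊓ cnj g W ≤ centralizer ((Z ⊓ cnj g W : Subgroup G) : Set G) := by
        intro x hx
        refine Subgroup.mem_centralizer_iff.mpr (fun y hy => ?_)
        have hxC : x ∈ centralizer ((W ⊔ cnj g W : Subgroup G) : Set G) :=
          (Subgroup.mem_inf.mp (Subgroup.mem_inf.mp hx).1).2
        have hyP : y ∈ (W ⊔ cnj g W : Subgroup G) :=
          Subgroup.mem_sup_right (Subgroup.mem_inf.mp hy).2
        exact Subgroup.mem_centralizer_iff.mp hxC y hyP
      rcases hdich _ hZWM hZWab with hZW1 | hZW1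
      · rcases hdich _ hZWgM hZWgab with hZW2 | hZW2
        · -- Case B3 : P = Z·W and P is abelian-ish enough
          have hQM : IsM (Z ⊔ W) := (key hZPM hWM).2.1
          have hQset : ((Z ⊔ W : Subgroup G) : Set G) = (Z : Set G) * (W : Set G) :=
            (key hZPM hWM).2.2.1
          have hQcard : Nat.card (Z ⊔ W : Subgroup G) = Nat.card Z * Nat.card W := by
            have h := (key hZPM hWM).2.2.2
            rw [hZW1] at h
            simpa using h
          have hQle : Z ⊔ W ≤ W ⊔ cnj g W := sup_le inf_le_left le_sup_left
          have hQP : Z ⊔ W = W ⊔ cnj g W := by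
            refine eq_of_le_of_card_le hQle ?_
            rw [hQcard, hPcard]
            exact Nat.mul_le_mul_right _ hZW
          -- now prove the commutation
          intro y hy
          refine Subgroup.mem_centralizer_iff.mpr (fun u hu => ?_)
          have hyP : y ∈ ((Z ⊔ W : Subgroup G) : Set G) := by
            rw [hQP]
            exact Subgroup.mem_sup_right hy
          rw [hQset] at hyP
          obtain ⟨z, hz, w', hw', hzw⟩ := Set.mem_mul.mp hyP
          have hzC : z ∈ centralizer ((W ⊔ cnj g W : Subgroup G) : Set G) :=
            (Subgroup.mem_inf.mp hz).2
          have h1 : u * z = z * u :=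
            Subgroup.mem_centralizer_iff.mp hzC u (Subgroup.mem_sup_left hu)
          have h2 : u * w' = w' * u :=
            Subgroup.mem_centralizer_iff.mp (hWab hw') u hu
          calc u * y = u * (z * w') := by rw [hzw]
          _ = (u * z) * w' := by rw [mul_assoc]
          _ = z * (u * w') := by rw [h1, mul_assoc]
          _ = (z * w') * u := by rw [h2, mul_assoc]
          _ = y * u := by rw [hzw]
        · -- cnj g W ≤ Z : done since Z ≤ C(P) ≤ C(W)
          have hle : Z ⊓ cnj g W = cnj g W := by
            refine eq_of_le_of_card_le inf_le_right ?_
            calc Nat.card (cnj g W : Subgroup G) = Nat.card W := card_cnj g W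
            _ ≤ _ := hZW2
          have hgZ : cnj g W ≤ Z := by
            conv_lhs => rw [← hle]
            exact inf_le_left
          have hgC : cnj g W ≤ centralizer ((W ⊔ cnj g W : Subgroup G) : Set G) :=
            le_trans hgZ inf_le_right
          exact le_trans hgC (centralizer_le (SetLike.coe_subset_coe.mpr le_sup_left))
      · -- W ≤ Z : done by symmetry
        have hle : Z ⊓ W = W := eq_of_le_of_card_le inf_le_right hZW1
        have hWZ : W ≤ Z := by
          conv_lhs => rw [← hle]
          exact inf_le_left
        have hWC : W ≤ centralizer ((W ⊔ cnj g W : Subgroup G) : Set G) :=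
          le_trans hWZ inf_le_right
        have : W ≤ centralizer ((cnj g W : Subgroup G) : Set G) :=
          le_trans hWC (centralizer_le (SetLike.coe_subset_coe.mpr le_sup_right))
        exact le_centralizer_comm.mp this
  -- endgame: centralizer of W is everything, so W ≤ Z(G) = ⊥
  have hnclle : Subgroup.normalClosure (W : Set G) ≤ centralizer (W : Set G) := by
    rw [Subgroup.normalClosure]
    refine (Subgroup.closure_le _).mpr ?_
    intro y hy
    obtain ⟨x, hx, hxy⟩ := Group.mem_conjugatesOfSet_iff.mp hy
    obtain ⟨c, hc⟩ := isConj_iff.mp hxy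
    have hyc : y ∈ cnj c W := by
      rw [mem_cnj, ← hc]
      have e : c⁻¹ * (c * x * c⁻¹) * c = x := by group
      rw [e]
      exact hx
    exact hclaim c hyc
  have hCWtop : centralizer (W : Set G) = ⊤ := by
    rw [← top_le_iff, ← hNtop, hNncl]
    exact hnclle
  have hWcenter : W ≤ Subgroup.center G := by
    intro x hx
    rw [Subgroup.mem_center_iff]
    intro y
    have hy : y ∈ centralizer (W : Set G) := by rw [hCWtop]; trivial
    exact (Subgroup.mem_centralizer_iff.mp hy x hx).symm
  have hcbot : Subgroup.center G = ⊥ :=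
    hG _ (by infer_instance) (by infer_instance)
  exact hWne (le_bot_iff.mp (hcbot ▸ hWcenter))

/-- Translation from the CD index-measure minimality to multiplicative maximality. -/
lemma isM_of_isCD {G : Type*} [Group G] [Finite G] {H : Subgroup G}
    (hH : IsCDSubgroup H) : IsM H := by
  intro K
  have hmu : cdMeasure H ≤ cdMeasure K := by
    rw [IsCDSubgroup] at hH
    rw [hH]
    exact Nat.sInf_le ⟨K, rfl⟩
  have hrel : ∀ X : Subgroup G, cdMeasure X * dd X = Nat.card G * Nat.card G := by
    intro X
    simp only [cdMeasure, dd]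
    calc X.index * (Subgroup.centralizer (X : Set G)).index *
        (Nat.card X * Nat.card (Subgroup.centralizer (X : Set G)))
        = (Nat.card X * X.index) *
          (Nat.card (Subgroup.centralizer (X : Set G)) *
            (Subgroup.centralizer (X : Set G)).index) := by ring
    _ = Nat.card G * Nat.card G := by
        rw [Subgroup.card_mul_index, Subgroup.card_mul_index]
  have hHpos : 0 < cdMeasure H := by
    simp only [cdMeasure]
    exact Nat.mul_pos (Nat.pos_of_ne_zero H.index_ne_zero_of_finite)
      (Nat.pos_of_ne_zero (Subgroup.centralizer (H : Set G)).index_ne_zero_of_finite)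
  have h1 : cdMeasure H * dd K ≤ cdMeasure K * dd K := Nat.mul_le_mul_right _ hmu
  rw [hrel K, ← hrel H] at h1
  exact Nat.le_of_mul_le_mul_left h1 hHpos

end CD17

theorem stmt_17 {G : Type*} [Group G] [Finite G]
    (hG : ∀ N : Subgroup G, N.Normal → IsMulCommutative N → N = ⊥)
    (H : Subgroup G) (hH : IsCDSubgroup H) :
    H ⊓ Subgroup.centralizer (H : Set G) = ⊥ ∧ H.Normal ∧
      (Subgroup.centralizer (H : Set G)).Normal ∧
      (H : Set G) * (Subgroup.centralizer (H : Set G) : Set G) = Set.univ := by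
  classical
  have hM : CD17.IsM H := CD17.isM_of_isCD hH
  have hCM : CD17.IsM (Subgroup.centralizer (H : Set G)) := (CD17.isM_centralizer hM).1
  have hIM : CD17.IsM (H ⊓ Subgroup.centralizer (H : Set G)) := (CD17.key hM hCM).1
  have hIab : H ⊓ Subgroup.centralizer (H : Set G) ≤
      Subgroup.centralizer ((H ⊓ Subgroup.centralizer (H : Set G) : Subgroup G) : Set G) := by
    intro x hx
    refine Subgroup.mem_centralizer_iff.mpr (fun y hy => ?_)
    have hxC : x ∈ Subgroup.centralizer (H : Set G) := (Subgroup.mem_inf.mp hx).2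
    have hyH : y ∈ H := (Subgroup.mem_inf.mp hy).1
    exact Subgroup.mem_centralizer_iff.mp hxC y hyH
  have hIbot : H ⊓ Subgroup.centralizer (H : Set G) = ⊥ :=
    CD17.crux (Nat.card G) G inferInstance inferInstance rfl hG _ hIM hIab
  have hd : Nat.card H * Nat.card (Subgroup.centralizer (H : Set G)) = Nat.card G :=
    CD17.dd_eq_card_of_isM hG hM
  have hcarduniv : Nat.card (Set.univ : Set G) = Nat.card G := by
    rw [Nat.card_coe_set_eq, Set.ncard_univ]
  have huniv : (H : Set G) * (Subgroup.centralizer (H : Set G) : Set G) = Set.univ := by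
    refine CD17.set_eq_of_subset_of_card_le (Set.subset_univ _) ?_
    rw [hcarduniv, CD17.card_mul_of_inf_bot hIbot]
    exact le_of_eq hd.symm
  have hHnormal : H.Normal := by
    refine CD17.normal_of_cnj (fun g => ?_)
    have hg : g ∈ (H : Set G) * (Subgroup.centralizer (H : Set G) : Set G) := by
      rw [huniv]; trivial
    obtain ⟨p, hp, c, hc, hpc⟩ := Set.mem_mul.mp hg
    have : CD17.cnj g H = H := by
      rw [← hpc, ← CD17.cnj_cnj, CD17.cnj_of_mem_centralizer hc, CD17.cnj_of_mem hp]
    exact le_of_eq this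
  have hCnormal : (Subgroup.centralizer (H : Set G)).Normal :=
    CD17.centralizer_normal_of_normal hHnormal
  exact ⟨hIbot, hHnormal, hCnormal, huniv⟩
end

section
/- Let G be a finite group and N a normal subgroup of G. Then for any subgroup H ≤ N, one has μ(N) ≤ m(N,H) ≤ m(G,H)/|G:N|; in particular, if H is a CD-subgroup of G contained in N, then μ(N) ≤ μ(G)/|G:N|. -/
open Pointwise

lemma centralizer_subgroupOf_eq {G : Type*} [Group G] (N H : Subgroup G) (hHN : H ≤ N) :
    Subgroup.centralizer ((H.subgroupOf N : Subgroup N) : Set N)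
      = (Subgroup.centralizer (H : Set G)).subgroupOf N := by
  ext n
  simp only [Subgroup.mem_centralizer_iff, Subgroup.mem_subgroupOf, SetLike.mem_coe,
    Subgroup.mem_centralizer_iff]
  constructor
  · intro h g hg
    have := h ⟨g, hHN hg⟩ (by simpa [Subgroup.mem_subgroupOf] using hg)
    exact congrArg Subtype.val this
  · intro h m hm
    have hm' : (m : G) ∈ H := hm
    exact Subtype.ext (h m hm')

theorem stmt_18 {G : Type*} [Group G] [Finite G] (N : Subgroup G) (hN : N.Normal)
    (H : Subgroup G) (hHN : H ≤ N) :
    cdMu N ≤ cdMeasure (H.subgroupOf N) ∧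
      cdMeasure (H.subgroupOf N) ≤ cdMeasure H / N.index ∧
      (IsCDSubgroup H → cdMu N ≤ cdMu G / N.index) := by
  have hNpos : 0 < N.index := Nat.pos_of_ne_zero Subgroup.index_ne_zero_of_finite
  have h1 : cdMu N ≤ cdMeasure (H.subgroupOf N) :=
    Nat.sInf_le ⟨H.subgroupOf N, rfl⟩
  have key : cdMeasure (H.subgroupOf N) * N.index ≤ cdMeasure H := by
    have hcent : (Subgroup.centralizer ((H.subgroupOf N : Subgroup N) : Set N)).index
        = (Subgroup.centralizer (H : Set G)).relIndex N := by
      rw [centralizer_subgroupOf_eq N H hHN]; rfl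
    have hidx : (H.subgroupOf N).index * N.index = H.index :=
      Subgroup.relIndex_mul_index hHN
    set C := Subgroup.centralizer (H : Set G)
    have hle : C.relIndex N ≤ C.index := by
      have := Subgroup.relIndex_le_of_le_right (H := C) (le_top : N ≤ ⊤)
        (by rw [Subgroup.relIndex_top_right]; exact Subgroup.index_ne_zero_of_finite)
      rwa [Subgroup.relIndex_top_right] at this
    calc cdMeasure (H.subgroupOf N) * N.index
        = (H.subgroupOf N).index * N.index * (C.relIndex N) := by
          rw [cdMeasure, hcent]; ring
      _ = H.index * C.relIndex N := by rw [hidx]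
      _ ≤ H.index * C.index := Nat.mul_le_mul_left _ hle
      _ = cdMeasure H := rfl
  have h2 : cdMeasure (H.subgroupOf N) ≤ cdMeasure H / N.index :=
    (Nat.le_div_iff_mul_le hNpos).mpr key
  refine ⟨h1, h2, fun hCD => ?_⟩
  calc cdMu N ≤ cdMeasure (H.subgroupOf N) := h1
    _ ≤ cdMeasure H / N.index := h2
    _ = cdMu G / N.index := by rw [hCD]
end

section
/- Let p be a prime and let G be a non-abelian finite p-group whose maximal CD-subgroup M(G) is a proper subgroup of G and in which the minimal index of a normal abelian subgroup equals μ(G)/p. Then M(G) has index p in G and M(G) is an abelian maximal subgroup of G. -/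
open Pointwise

section Aux

variable {G : Type*} [Group G]

lemma centralizer_comap_mulEquiv (e : G ≃* G) (M : Subgroup G) :
    Subgroup.centralizer ((M.comap e.toMonoidHom : Subgroup G) : Set G) =
      (Subgroup.centralizer (M : Set G)).comap e.toMonoidHom := by
  ext x
  simp only [Subgroup.mem_comap, Subgroup.mem_centralizer_iff, SetLike.mem_coe,
    MulEquiv.coe_toMonoidHom]
  constructor
  · intro h y hy
    have h1 := h (e.symm y) (by simpa using hy)
    have h2 := congrArg e h1
    simpa using h2
  · intro h y hy
    have h1 := h (e y) hy
    have h2 : e (y * x) = e (x * y) := by simpa using h1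
    exact e.injective h2

lemma cdMeasure_comap_mulEquiv (e : G ≃* G) (M : Subgroup G) :
    cdMeasure (M.comap e.toMonoidHom) = cdMeasure M := by
  unfold cdMeasure
  have hs : Function.Surjective ⇑e.toMonoidHom := e.surjective
  rw [centralizer_comap_mulEquiv,
    Subgroup.index_comap_of_surjective M hs,
    Subgroup.index_comap_of_surjective (Subgroup.centralizer (M : Set G)) hs]

lemma cdMu_le (H : Subgroup G) : cdMu G ≤ cdMeasure H := Nat.sInf_le ⟨H, rfl⟩

/-- A nontrivial normal subgroup of a finite `p`-group contains a nontrivial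
central element. -/
lemma exists_ne_one_mem_center_of_normal {p : ℕ} (hp : p.Prime) {Q : Type*} [Group Q] [Finite Q]
    (hQ : IsPGroup p Q) {N : Subgroup Q} (hN : N.Normal) (hNbot : N ≠ ⊥) :
    ∃ x : Q, x ∈ N ∧ x ≠ 1 ∧ x ∈ Subgroup.center Q := by
  haveI := Fact.mk hp
  haveI := hN
  have hQ' : IsPGroup p (ConjAct Q) := hQ.of_equiv ConjAct.toConjAct
  haveI : Nontrivial N := (Subgroup.nontrivial_iff_ne_bot N).mpr hNbot
  have hNp : IsPGroup p N := hQ.to_subgroup N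
  obtain ⟨n, hn0, hn⟩ := hNp.nontrivial_iff_card.mp inferInstance
  have hdvd : p ∣ Nat.card N := hn ▸ dvd_pow_self p hn0.ne'
  have h1 : (1 : N) ∈ MulAction.fixedPoints (ConjAct Q) N := by
    intro g
    refine Subtype.ext ?_
    rw [ConjAct.Subgroup.val_conj_smul]
    simp [ConjAct.smul_def]
  obtain ⟨b, hb, hb1⟩ :=
    hQ'.exists_fixed_point_of_prime_dvd_card_of_fixed_point (α := N) hdvd h1
  refine ⟨(b : Q), b.2, ?_, ?_⟩
  · intro hb1'
    exact hb1 (Subtype.ext hb1'.symm)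
  · rw [Subgroup.mem_center_iff]
    intro g
    have hfix := hb (ConjAct.toConjAct g)
    have hcoe : ConjAct.toConjAct g • (b : Q) = (b : Q) := by
      rw [← ConjAct.Subgroup.val_conj_smul]; exact congrArg _ hfix
    rw [ConjAct.toConjAct_smul] at hcoe
    exact mul_inv_eq_iff_eq_mul.mp hcoe

end Aux

theorem stmt_19 {G : Type*} [Group G] [Finite G] (p : ℕ) (hp : p.Prime)
    (hpG : IsPGroup p G) (hnonab : ¬ ∀ a b : G, a * b = b * a)
    (M : Subgroup G) (hM : IsCDSubgroup M)
    (hMmax : ∀ H : Subgroup G, IsCDSubgroup H → H ≤ M) (hMne : M ≠ ⊤)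
    (hmin : sInf {n : ℕ | ∃ N : Subgroup G, N.Normal ∧ IsMulCommutative N ∧ N.index = n} =
      cdMu G / p) :
    M.index = p ∧ IsMulCommutative M := by
  classical
  haveI := Fact.mk hp
  have hidx : ∀ H : Subgroup G, H.index ≠ 0 := fun H => Subgroup.index_ne_zero_of_finite
  set C := Subgroup.centralizer (M : Set G) with hC
  -- M is normal in G
  have hMnormal : M.Normal := by
    constructor
    intro n hn g
    have hcd : IsCDSubgroup (M.comap (MulAut.conj g⁻¹).toMonoidHom) := by
      show cdMeasure _ = cdMu G
      rw [cdMeasure_comap_mulEquiv]; exact hM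
    have hle := hMmax _ hcd
    apply hle
    rw [Subgroup.mem_comap]
    show (MulAut.conj g⁻¹) (g * n * g⁻¹) ∈ M
    have : (MulAut.conj g⁻¹) (g * n * g⁻¹) = n := by
      simp [MulAut.conj_apply, mul_assoc]
    rwa [this]
  -- C = C_G(M) is a CD-subgroup
  have hMleCC : M ≤ Subgroup.centralizer (C : Set G) := Subgroup.le_centralizer_iff.mpr le_rfl
  have hCle : cdMeasure C ≤ cdMeasure M := by
    unfold cdMeasure
    rw [← hC]
    calc C.index * (Subgroup.centralizer (C : Set G)).index
        ≤ C.index * M.index := by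
          exact Nat.mul_le_mul_left _
            (Nat.le_of_dvd (Nat.pos_of_ne_zero (hidx M)) (Subgroup.index_dvd_of_le hMleCC))
      _ = M.index * C.index := mul_comm _ _
  have hCcd : IsCDSubgroup C :=
    le_antisymm (hCle.trans_eq hM) (cdMu_le C)
  have hCM : C ≤ M := hMmax C hCcd
  -- C is commutative and normal
  have hCleCC : C ≤ Subgroup.centralizer (C : Set G) := by
    rw [hC]
    exact Subgroup.centralizer_le (fun x hx => hCM hx)
  have hCcomm : IsMulCommutative C := Subgroup.le_centralizer_iff_isMulCommutative.mp hCleCC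
  have hCnormal : C.Normal := by
    constructor
    intro n hn g
    rw [Subgroup.mem_centralizer_iff]
    intro h hh
    have hh' : g⁻¹ * h * g ∈ M := by
      have := hMnormal.conj_mem h hh g⁻¹
      rwa [inv_inv] at this
    have hc := Subgroup.mem_centralizer_iff.mp hn _ hh'
    have h2 := congrArg (fun y => g * y * g⁻¹) hc
    simpa [mul_assoc] using h2
  -- lower bound for indices of normal abelian subgroups
  have hk_le : ∀ N : Subgroup G, N.Normal → IsMulCommutative N → cdMu G / p ≤ N.index := by
    intro N hN1 hN2
    rw [← hmin]
    exact Nat.sInf_le ⟨N, hN1, hN2, rfl⟩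
  set k := cdMu G / p with hk
  have hkC : k ≤ C.index := hk_le C hCnormal hCcomm
  -- p divides the index of M
  obtain ⟨n, hn⟩ := hpG.index M
  have hMi1 : M.index ≠ 1 := fun h => hMne (Subgroup.index_eq_one.mp h)
  have hpdvd : p ∣ M.index := by
    rcases Nat.eq_zero_or_pos n with h0 | h0
    · exact absurd (by rw [hn, h0, pow_zero]) hMi1
    · exact hn ▸ dvd_pow_self p h0.ne'
  have hmuM : M.index * C.index = cdMu G := hM
  have hmune : cdMu G ≠ 0 := by
    rw [← hmuM]; exact Nat.mul_ne_zero (hidx M) (hidx C)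
  have hpk : p * k = cdMu G := by
    rw [hk]
    exact Nat.mul_div_cancel' (by rw [← hmuM]; exact dvd_mul_of_dvd_left hpdvd _)
  have hkne : k ≠ 0 := by
    intro h; rw [h, mul_zero] at hpk; exact hmune hpk.symm
  have hpi : p ≤ M.index := Nat.le_of_dvd (Nat.pos_of_ne_zero (hidx M)) hpdvd
  -- index computations: |G:M| = p and |G:C| = k
  have h1 : p * C.index ≤ p * k := by
    calc p * C.index ≤ M.index * C.index := Nat.mul_le_mul_right _ hpi
      _ = p * k := by rw [hmuM, hpk]
  have hCk : C.index = k :=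
    le_antisymm (Nat.le_of_mul_le_mul_left h1 hp.pos) hkC
  have hMp : M.index = p := by
    have h2 : M.index * k = p * k := by
      conv_lhs => rw [← hCk]
      rw [hmuM, ← hpk]
    exact Nat.eq_of_mul_eq_mul_right (Nat.pos_of_ne_zero hkne) h2
  refine ⟨hMp, ?_⟩
  -- it remains to show that M is abelian, i.e. M ≤ C
  rw [← Subgroup.le_centralizer_iff_isMulCommutative, ← hC]
  by_contra hMC
  haveI := hCnormal
  set π := QuotientGroup.mk' C with hπ
  have hπs : Function.Surjective π := QuotientGroup.mk'_surjective C
  have hQp : IsPGroup p (G ⧸ C) := hpG.to_quotient C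
  have hNmap : (M.map π).Normal := hMnormal.map π hπs
  have hNne : M.map π ≠ ⊥ := by
    rw [Ne, Subgroup.map_eq_bot_iff, hπ, QuotientGroup.ker_mk']
    exact hMC
  obtain ⟨x, hxN, hx1, hxc⟩ := exists_ne_one_mem_center_of_normal hp hQp hNmap hNne
  set W := Subgroup.zpowers x with hW
  have hWle : W ≤ M.map π := Subgroup.zpowers_le.mpr hxN
  have hWnormal : W.Normal := by
    constructor
    intro w hw g
    have hcomm := Subgroup.mem_center_iff.mp ((Subgroup.zpowers_le.mpr hxc) hw) g
    rw [hcomm, mul_inv_cancel_right]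
    exact hw
  set B := W.comap π with hB
  have hBnormal : B.Normal := hWnormal.comap π
  have hBleM : B ≤ M := by
    have h3 : W.comap π ≤ (M.map π).comap π := Subgroup.comap_mono hWle
    rwa [Subgroup.comap_map_eq, hπ, QuotientGroup.ker_mk', sup_of_le_left hCM] at h3
  obtain ⟨b₀, hb₀⟩ := hπs x
  have hb₀B : b₀ ∈ B := by
    rw [hB, Subgroup.mem_comap, hb₀]
    exact Subgroup.mem_zpowers x
  have hb₀M : b₀ ∈ M := hBleM hb₀B
  -- commuting helper
  have hM' : ∀ u, u ∈ C → ∀ v, v ∈ M → v * u = u * v := fun u hu v hv =>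
    Subgroup.mem_centralizer_iff.mp hu v hv
  -- decomposition of elements of B
  have hdec : ∀ a, a ∈ B → ∃ m : ℤ, (b₀ ^ m)⁻¹ * a ∈ C := by
    intro a ha
    obtain ⟨m, hm⟩ := Subgroup.mem_zpowers_iff.mp (Subgroup.mem_comap.mp ha)
    refine ⟨m, ?_⟩
    have h4 : π ((b₀ ^ m)⁻¹ * a) = 1 := by
      rw [map_mul, map_inv, map_zpow, hb₀, hm, inv_mul_cancel]
    have h5 : (b₀ ^ m)⁻¹ * a ∈ π.ker := h4
    rwa [hπ, QuotientGroup.ker_mk'] at h5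
  have hBcomm : IsMulCommutative B := by
    rw [← Subgroup.le_centralizer_iff_isMulCommutative]
    intro a ha
    rw [Subgroup.mem_centralizer_iff]
    intro b hb
    obtain ⟨m, hca⟩ := hdec a ha
    obtain ⟨n', hcb⟩ := hdec b (SetLike.mem_coe.mp hb)
    have ea : a = b₀ ^ m * ((b₀ ^ m)⁻¹ * a) := by rw [mul_inv_cancel_left]
    have eb : b = b₀ ^ n' * ((b₀ ^ n')⁻¹ * b) := by rw [mul_inv_cancel_left]
    set c₁ := (b₀ ^ m)⁻¹ * a with hc₁
    set c₂ := (b₀ ^ n')⁻¹ * b with hc₂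
    have comm1 : Commute c₂ (b₀ ^ m) := (hM' c₂ hcb _ (Subgroup.zpow_mem M hb₀M m)).symm
    have comm2 : Commute c₁ (b₀ ^ n') := (hM' c₁ hca _ (Subgroup.zpow_mem M hb₀M n')).symm
    have comm3 : c₂ * c₁ = c₁ * c₂ := hM' c₁ hca c₂ (hCM hcb)
    have comm4 : b₀ ^ n' * b₀ ^ m = b₀ ^ m * b₀ ^ n' := by
      rw [← zpow_add, ← zpow_add, add_comm]
    calc b * a = b₀ ^ n' * c₂ * (b₀ ^ m * c₁) := by rw [← ea, ← eb]
      _ = b₀ ^ n' * b₀ ^ m * (c₂ * c₁) := comm1.mul_mul_mul_comm (b₀ ^ n') c₁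
      _ = b₀ ^ m * b₀ ^ n' * (c₁ * c₂) := by rw [comm3, comm4]
      _ = b₀ ^ m * c₁ * (b₀ ^ n' * c₂) := (comm2.mul_mul_mul_comm (b₀ ^ m) c₂).symm
      _ = a * b := by rw [← ea, ← eb]
  have hkB : k ≤ B.index := hk_le B hBnormal hBcomm
  have hBidx : B.index = W.index := Subgroup.index_comap_of_surjective W hπs
  haveI : Nontrivial W := by
    refine ⟨⟨x, Subgroup.mem_zpowers x⟩, 1, ?_⟩
    intro h
    exact hx1 (by simpa using Subtype.ext_iff.mp h)
  have hWlt : W.index < Nat.card (G ⧸ C) := by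
    have hcard : W.index * Nat.card W = Nat.card (G ⧸ C) := Subgroup.index_mul_card W
    rw [← hcard]
    exact (lt_mul_iff_one_lt_right
      (Nat.pos_of_ne_zero Subgroup.index_ne_zero_of_finite)).mpr Finite.one_lt_card
  have hCidx : C.index = Nat.card (G ⧸ C) := Subgroup.index_eq_card C
  have : k < k := by
    calc k ≤ B.index := hkB
      _ = W.index := hBidx
      _ < Nat.card (G ⧸ C) := hWlt
      _ = C.index := hCidx.symm
      _ = k := hCk
  exact absurd this (lt_irrefl k)
end
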